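/- Let T > 0, R > 0, n ∈ ℕ with n ≥ 1, τ = T/n, and let [g]_n = (g_0,…,g_n) ∈ ℝ^{n+1} satisfy ‖[g]_n‖_{w¹₂} ≤ R. Let g^n = P_n([g]_n) be the piecewise linear interpolation of [g]_n. Then (i) ‖g^n‖²_{W¹₂(0,T)} ≤ ‖[g]_n‖²_{w¹₂} + C√T·√τ·√(Σ_{k=1}^n τ g_k²) + (τ²/3)·Σ_{k=1}^n τ ((g_k − g_{k−1})/τ)², where C = √(Σ_{k=1}^n τ ((g_k − g_{k−1})/τ)²); and (ii) for every ε > 0 there exists N (depending only on T, R, ε) such that ‖g^n‖_{W¹₂(0,T)} ≤ R + ε whenever n ≥ N. -/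

import Mathlib

open MeasureTheory

/-- The square of the discrete Sobolev norm `‖[g]_n‖²_{w¹₂}`. -/
noncomputable def discNormSq (T : ℝ) (n : ℕ) (G : ℕ → ℝ) : ℝ :=
  ∑ k ∈ Finset.Icc 1 n, (T / n) * (G k) ^ 2
    + ∑ k ∈ Finset.Icc 1 n, (T / n) * ((G k - G (k - 1)) / (T / n)) ^ 2

/-- `gn` is the continuous piecewise linear interpolation `P_n([g]_n)` of `G = [g]_n`. -/
def Interpolates (T : ℝ) (n : ℕ) (G : ℕ → ℝ) (gn : ℝ → ℝ) : Prop :=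
  ∀ k, 1 ≤ k → k ≤ n →
    ∀ t ∈ Set.Ico (((k : ℝ) - 1) * (T / n)) ((k : ℝ) * (T / n)),
      gn t = G (k - 1) + (G k - G (k - 1)) / (T / n) * (t - ((k : ℝ) - 1) * (T / n))

/-- The square of the `W¹₂(0,T)` norm, `∫_0^T g² + ∫_0^T g'²` (with the a.e. derivative). -/
noncomputable def W12NormSq (T : ℝ) (g : ℝ → ℝ) : ℝ :=
  (∫ t in (0 : ℝ)..T, (g t) ^ 2) + ∫ t in (0 : ℝ)..T, (deriv g t) ^ 2

lemma sum_Icc_one {M : Type*} [AddCommMonoid M] (n : ℕ) (f : ℕ → M) :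
    ∑ k ∈ Finset.Icc 1 n, f k = ∑ k ∈ Finset.range n, f (k+1) := by
  rw [← Finset.Ico_add_one_right_eq_Icc, Finset.sum_Ico_eq_sum_range]
  simp [add_comm]

lemma piece_sq_integral (p d a τ : ℝ) :
    ∫ t in a..(a+τ), (p + d*(t-a))^2 = τ*p^2 + τ^2*(p*d) + τ^3*d^2/3 := by
  have h : ∀ x ∈ Set.uIcc a (a+τ),
      HasDerivAt (fun t => p^2*(t-a) + p*d*(t-a)^2 + d^2/3*(t-a)^3) ((p + d*(x-a))^2) x := by
    intro x _
    have h1 : HasDerivAt (fun t : ℝ => t - a) 1 x := (hasDerivAt_id x).sub_const a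
    have h2 := (h1.pow 2).const_mul (p*d)
    have h3 := (h1.pow 3).const_mul (d^2/3)
    have h0 := h1.const_mul (p^2)
    have h4 := (h0.add h2).add h3
    simp only [Pi.pow_apply] at h4
    exact h4.congr_deriv (by ring)
  have hint : IntervalIntegrable (fun x => (p + d*(x-a))^2) volume a (a+τ) := by
    apply Continuous.intervalIntegrable; continuity
  rw [intervalIntegral.integral_eq_sub_of_hasDerivAt h hint]
  ring

lemma gn_ae_eq {gn : ℝ → ℝ} {p d a b : ℝ} (hab : a ≤ b)
    (hk : ∀ t ∈ Set.Ico a b, gn t = p + d*(t-a)) :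
    ∀ᵐ x : ℝ, x ∈ Set.uIoc a b → gn x = p + d*(x-a) := by
  filter_upwards [compl_mem_ae_iff.mpr (measure_singleton b)] with x hx hmem
  rw [Set.uIoc_of_le hab] at hmem
  exact hk x ⟨hmem.1.le, lt_of_le_of_ne hmem.2 hx⟩

lemma piece_gn_sq (gn : ℝ → ℝ) (p d a b : ℝ) (hab : a ≤ b)
    (hk : ∀ t ∈ Set.Ico a b, gn t = p + d*(t-a)) :
    ∫ t in a..b, (gn t)^2 = ∫ t in a..b, (p + d*(t-a))^2 := by
  apply intervalIntegral.integral_congr_ae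
  filter_upwards [gn_ae_eq hab hk] with x hx hmem
  rw [hx hmem]

lemma piece_gn_sq_intble (gn : ℝ → ℝ) (p d a b : ℝ) (hab : a ≤ b)
    (hk : ∀ t ∈ Set.Ico a b, gn t = p + d*(t-a)) :
    IntervalIntegrable (fun t => (gn t)^2) volume a b := by
  have hc : IntervalIntegrable (fun t => (p + d*(t-a))^2) volume a b := by
    apply Continuous.intervalIntegrable; continuity
  rw [intervalIntegrable_iff] at hc ⊢
  apply hc.congr
  have := gn_ae_eq hab hk
  rw [Set.uIoc_of_le hab] at this ⊢
  refine (ae_restrict_iff' measurableSet_Ioc).mpr ?_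
  filter_upwards [this] with x hx hmem
  rw [hx hmem]

lemma piece_deriv (gn : ℝ → ℝ) (p d a b : ℝ)
    (hk : ∀ t ∈ Set.Ico a b, gn t = p + d*(t-a)) :
    ∀ t ∈ Set.Ioo a b, deriv gn t = d := by
  intro t ht
  have hmem : Set.Ioo a b ∈ nhds t := Ioo_mem_nhds ht.1 ht.2
  have heq : gn =ᶠ[nhds t] (fun x => p + d*(x-a)) :=
    Filter.eventually_of_mem hmem fun x hx => hk x ⟨hx.1.le, hx.2⟩
  rw [heq.deriv_eq]
  have : HasDerivAt (fun x : ℝ => p + d*(x-a)) d t := by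
    have h1 : HasDerivAt (fun x : ℝ => x - a) 1 t := (hasDerivAt_id t).sub_const a
    simpa using (h1.const_mul d).const_add p
  exact this.deriv

lemma piece_deriv_sq (gn : ℝ → ℝ) (p d a b : ℝ) (hab : a ≤ b)
    (hk : ∀ t ∈ Set.Ico a b, gn t = p + d*(t-a)) :
    ∫ t in a..b, (deriv gn t)^2 = (b - a) * d^2 := by
  have : ∫ t in a..b, (deriv gn t)^2 = ∫ t in a..b, d^2 := by
    apply intervalIntegral.integral_congr_ae
    have h1 : ∀ᵐ x : ℝ, x ≠ a := compl_mem_ae_iff.mpr (measure_singleton _)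
    have h2 : ∀ᵐ x : ℝ, x ≠ b := compl_mem_ae_iff.mpr (measure_singleton _)
    filter_upwards [h1, h2] with x hxa hxb hmem
    rw [Set.uIoc_of_le hab] at hmem
    rw [piece_deriv gn p d a b hk x ⟨lt_of_le_of_ne hmem.1.le (Ne.symm hxa), lt_of_le_of_ne hmem.2 hxb⟩]
  rw [this, intervalIntegral.integral_const, smul_eq_mul]

lemma piece_deriv_sq_intble (gn : ℝ → ℝ) (p d a b : ℝ) (hab : a ≤ b)
    (hk : ∀ t ∈ Set.Ico a b, gn t = p + d*(t-a)) :
    IntervalIntegrable (fun t => (deriv gn t)^2) volume a b := by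
  have hc : IntervalIntegrable (fun _ : ℝ => d^2) volume a b := intervalIntegrable_const
  rw [intervalIntegrable_iff, Set.uIoc_of_le hab] at hc ⊢
  apply hc.congr
  refine (ae_restrict_iff' measurableSet_Ioc).mpr ?_
  have h1 : ∀ᵐ x : ℝ, x ≠ a := compl_mem_ae_iff.mpr (measure_singleton _)
  have h2 : ∀ᵐ x : ℝ, x ≠ b := compl_mem_ae_iff.mpr (measure_singleton _)
  filter_upwards [h1, h2] with x hxa hxb hmem
  rw [piece_deriv gn p d a b hk x ⟨lt_of_le_of_ne hmem.1.le (Ne.symm hxa), lt_of_le_of_ne hmem.2 hxb⟩]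

lemma key (T : ℝ) (hT : 0 < T) (n : ℕ) (hn : 1 ≤ n) (G : ℕ → ℝ)
    (gn : ℝ → ℝ) (hI : Interpolates T n G gn) :
    W12NormSq T gn
      ≤ discNormSq T n G
        + Real.sqrt (∑ k ∈ Finset.Icc 1 n, (T / n) * ((G k - G (k - 1)) / (T / n)) ^ 2)
          * Real.sqrt T * Real.sqrt (T / n)
          * Real.sqrt (∑ k ∈ Finset.Icc 1 n, (T / n) * (G k) ^ 2)
        + ((T / n) ^ 2 / 3)
          * ∑ k ∈ Finset.Icc 1 n, (T / n) * ((G k - G (k - 1)) / (T / n)) ^ 2 := by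
  have hn0 : (0:ℝ) < n := by exact_mod_cast hn
  set τ := T / n with hτdef
  have hτ : 0 < τ := div_pos hT hn0
  set d : ℕ → ℝ := fun k => (G (k+1) - G k)/τ with hd
  set a : ℕ → ℝ := fun k => k * τ with ha
  have haS : ∀ k : ℕ, a (k+1) = a k + τ := by
    intro k; simp only [ha]; push_cast; ring
  have hab : ∀ k : ℕ, a k ≤ a (k+1) := by
    intro k; rw [haS]; linarith
  have hdk : ∀ k : ℕ, d k * τ = G (k+1) - G k := by
    intro k; simp only [hd]; field_simp
  have hkk : ∀ k, k < n → ∀ t ∈ Set.Ico (a k) (a (k+1)), gn t = G k + d k * (t - a k) := by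
    intro k hkn t ht
    rw [haS] at ht
    simp only [ha] at ht
    have hmem : t ∈ Set.Ico (((((k+1):ℕ):ℝ) - 1) * (T / n)) ((((k+1):ℕ):ℝ) * (T / n)) := by
      rw [show (T/(n:ℝ)) = τ from hτdef.symm]
      push_cast
      constructor
      · have := ht.1; linarith [this]
      · have := ht.2; nlinarith [ht.2]
    have h' := hI (k+1) (by omega) (by omega) t hmem
    rw [show (T/(n:ℝ)) = τ from hτdef.symm] at h'
    simp only [Nat.add_sub_cancel] at h'
    rw [h']
    simp only [hd, ha]
    push_cast
    ring
  -- The two integrals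
  have hint1 : ∀ k < n, IntervalIntegrable (fun t => (gn t)^2) volume (a k) (a (k+1)) :=
    fun k hkn => piece_gn_sq_intble gn (G k) (d k) _ _ (hab k) (hkk k hkn)
  have hint2 : ∀ k < n, IntervalIntegrable (fun t => (deriv gn t)^2) volume (a k) (a (k+1)) :=
    fun k hkn => piece_deriv_sq_intble gn (G k) (d k) _ _ (hab k) (hkk k hkn)
  have ha0 : a 0 = 0 := by simp [ha]
  have han : a n = T := by
    simp only [ha]
    rw [hτdef]
    field_simp
  have hsq : ∫ t in (0:ℝ)..T, (gn t)^2
      = ∑ k ∈ Finset.range n, (τ*(G k)^2 + τ^2*(G k * d k) + τ^3*(d k)^2/3) := by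
    have hsum := intervalIntegral.sum_integral_adjacent_intervals (f := fun t => (gn t)^2)
      (μ := volume) (a := a) hint1
    rw [ha0, han] at hsum
    rw [← hsum]
    apply Finset.sum_congr rfl
    intro k hkn
    rw [Finset.mem_range] at hkn
    rw [piece_gn_sq gn (G k) (d k) _ _ (hab k) (hkk k hkn), haS k, piece_sq_integral]
  have hdr : ∫ t in (0:ℝ)..T, (deriv gn t)^2 = ∑ k ∈ Finset.range n, τ*(d k)^2 := by
    have hsum := intervalIntegral.sum_integral_adjacent_intervals (f := fun t => (deriv gn t)^2)
      (μ := volume) (a := a) hint2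
    rw [ha0, han] at hsum
    rw [← hsum]
    apply Finset.sum_congr rfl
    intro k hkn
    rw [Finset.mem_range] at hkn
    rw [piece_deriv_sq gn (G k) (d k) _ _ (hab k) (hkk k hkn), haS k]
    ring
  set A := ∑ k ∈ Finset.range n, τ*(G (k+1))^2 with hA
  set Dd := ∑ k ∈ Finset.range n, τ*(d k)^2 with hDd
  set S := ∑ k ∈ Finset.range n, τ*(G (k+1) * d k) with hS
  have hW : W12NormSq T gn = A + Dd - τ*S + (τ^2/3)*Dd := by
    rw [W12NormSq, hsq, hdr, hA, hDd, hS, Finset.mul_sum, Finset.mul_sum,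
      ← Finset.sum_add_distrib, ← Finset.sum_add_distrib, ← Finset.sum_sub_distrib,
      ← Finset.sum_add_distrib]
    apply Finset.sum_congr rfl
    intro k _
    linear_combination (τ*(G k + G (k+1))) * hdk k
  -- identify statement sums
  have hSA : ∑ k ∈ Finset.Icc 1 n, τ * (G k) ^ 2 = A := by
    rw [hA, sum_Icc_one]
  have hSD : ∑ k ∈ Finset.Icc 1 n, τ * ((G k - G (k - 1)) / τ) ^ 2 = Dd := by
    rw [hDd, sum_Icc_one]
    refine Finset.sum_congr rfl fun k _ => ?_
    simp only [hd, Nat.add_sub_cancel]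
  have hdisc : discNormSq T n G = A + Dd := by
    rw [discNormSq, ← hτdef, hSA, hSD]
  rw [hW, hdisc, hSA, hSD]
  have hA0 : 0 ≤ A := Finset.sum_nonneg fun k _ => by positivity
  have hD0 : 0 ≤ Dd := Finset.sum_nonneg fun k _ => by positivity
  -- Cauchy-Schwarz
  have hss : Real.sqrt τ * Real.sqrt τ = τ := Real.mul_self_sqrt hτ.le
  have hcs := Finset.sum_mul_sq_le_sq_mul_sq (Finset.range n)
    (fun k => Real.sqrt τ * G (k+1)) (fun k => Real.sqrt τ * d k)
  have e1 : ∑ k ∈ Finset.range n, (Real.sqrt τ * G (k+1)) * (Real.sqrt τ * d k) = S := by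
    rw [hS]
    refine Finset.sum_congr rfl fun k _ => ?_
    rw [show (Real.sqrt τ * G (k+1)) * (Real.sqrt τ * d k)
        = (Real.sqrt τ * Real.sqrt τ) * (G (k+1) * d k) by ring, hss]
  have e2 : ∑ k ∈ Finset.range n, (Real.sqrt τ * G (k+1))^2 = A := by
    rw [hA]
    refine Finset.sum_congr rfl fun k _ => ?_
    rw [mul_pow, Real.sq_sqrt hτ.le]
  have e3 : ∑ k ∈ Finset.range n, (Real.sqrt τ * d k)^2 = Dd := by
    rw [hDd]
    refine Finset.sum_congr rfl fun k _ => ?_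
    rw [mul_pow, Real.sq_sqrt hτ.le]
  rw [e1, e2, e3] at hcs
  have h1 : -S ≤ Real.sqrt A * Real.sqrt Dd := by
    have h2 := Real.sqrt_le_sqrt hcs
    rw [Real.sqrt_mul hA0] at h2
    calc -S ≤ |S| := neg_le_abs S
      _ = Real.sqrt (S^2) := (Real.sqrt_sq_eq_abs S).symm
      _ ≤ _ := h2
  have hn1 : (1:ℝ) ≤ n := by exact_mod_cast hn
  have hτT : τ ≤ T := by
    rw [hτdef, div_le_iff₀ hn0]
    nlinarith [hT.le]
  have hsτT : Real.sqrt τ ≤ Real.sqrt T := Real.sqrt_le_sqrt hτT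
  have key : -(τ*S) ≤ Real.sqrt Dd * Real.sqrt T * Real.sqrt τ * Real.sqrt A := by
    have c1 : -(τ*S) = τ * (-S) := by ring
    rw [c1]
    calc τ * (-S) ≤ τ * (Real.sqrt A * Real.sqrt Dd) :=
          mul_le_mul_of_nonneg_left h1 hτ.le
      _ = Real.sqrt Dd * Real.sqrt τ * Real.sqrt τ * Real.sqrt A := by
          linear_combination (-(Real.sqrt A * Real.sqrt Dd)) * hss
      _ ≤ Real.sqrt Dd * Real.sqrt T * Real.sqrt τ * Real.sqrt A := by gcongr
  linarith

set_option maxHeartbeats 1000000 in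
/-- (i) the bound `‖g^n‖²_{W¹₂} ≤ ‖[g]_n‖²_{w¹₂} + C√T√τ√(Στg_k²) + (τ²/3)Στ((g_k−g_{k−1})/τ)²`
with `C = √(Στ((g_k−g_{k−1})/τ)²)`; and (ii) for every `ε > 0` there is `N` (depending only on
`T, R, ε`) with `‖g^n‖_{W¹₂} ≤ R + ε` for `n ≥ N`. -/
theorem interp_W12_norm_bound (T R : ℝ) (hT : 0 < T) (hR : 0 < R) :
    (∀ n : ℕ, 1 ≤ n → ∀ G : ℕ → ℝ, Real.sqrt (discNormSq T n G) ≤ R →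
      ∀ gn : ℝ → ℝ, Interpolates T n G gn →
        W12NormSq T gn
          ≤ discNormSq T n G
            + Real.sqrt (∑ k ∈ Finset.Icc 1 n, (T / n) * ((G k - G (k - 1)) / (T / n)) ^ 2)
              * Real.sqrt T * Real.sqrt (T / n)
              * Real.sqrt (∑ k ∈ Finset.Icc 1 n, (T / n) * (G k) ^ 2)
            + ((T / n) ^ 2 / 3)
              * ∑ k ∈ Finset.Icc 1 n, (T / n) * ((G k - G (k - 1)) / (T / n)) ^ 2) ∧
    (∀ ε : ℝ, 0 < ε → ∃ N : ℕ, ∀ n : ℕ, N ≤ n → 1 ≤ n →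
      ∀ G : ℕ → ℝ, Real.sqrt (discNormSq T n G) ≤ R →
        ∀ gn : ℝ → ℝ, Interpolates T n G gn →
          Real.sqrt (W12NormSq T gn) ≤ R + ε) := by
  constructor
  · intro n hn G _ gn hI
    exact key T hT n hn G gn hI
  · intro ε hε
    set M : ℝ := Real.sqrt T * R^2 + R^2/3 + 1 with hM
    have hM0 : 0 < M := by positivity
    set δ : ℝ := min 1 ((2*R*ε/M)^2) with hδ
    have hδ0 : 0 < δ := lt_min one_pos (by positivity)
    have hδ1 : δ ≤ 1 := min_le_left _ _
    obtain ⟨N, hN⟩ := exists_nat_ge (T/δ)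
    refine ⟨N+1, ?_⟩
    intro n hnN hn1 G hGR gn hI
    have hn0 : (0:ℝ) < n := by exact_mod_cast hn1
    have hτ0 : 0 < T/n := div_pos hT hn0
    have hτδ : T/n ≤ δ := by
      rw [div_le_iff₀ hn0]
      have h2 : (T/δ) ≤ (n:ℝ) := by
        refine le_trans hN ?_
        exact_mod_cast le_trans (Nat.le_succ N) hnN
      rw [div_le_iff₀ hδ0] at h2
      linarith
    have hdisc0 : 0 ≤ discNormSq T n G := by
      unfold discNormSq; positivity
    have hdiscR : discNormSq T n G ≤ R^2 := by
      calc discNormSq T n G = (Real.sqrt (discNormSq T n G))^2 := (Real.sq_sqrt hdisc0).symm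
        _ ≤ R^2 := pow_le_pow_left₀ (Real.sqrt_nonneg _) hGR 2
    set A := ∑ k ∈ Finset.Icc 1 n, (T / n) * (G k) ^ 2 with hAdef
    set D := ∑ k ∈ Finset.Icc 1 n, (T / n) * ((G k - G (k - 1)) / (T / n)) ^ 2 with hDdef
    have hA0 : 0 ≤ A := Finset.sum_nonneg fun k _ => by positivity
    have hD0 : 0 ≤ D := Finset.sum_nonneg fun k _ => by positivity
    have hAD : A + D = discNormSq T n G := by rw [discNormSq]
    have hAR : A ≤ R^2 := by linarith
    have hDR : D ≤ R^2 := by linarith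
    have hsA : Real.sqrt A ≤ R := by
      calc Real.sqrt A ≤ Real.sqrt (R^2) := Real.sqrt_le_sqrt hAR
        _ = R := Real.sqrt_sq hR.le
    have hsD : Real.sqrt D ≤ R := by
      calc Real.sqrt D ≤ Real.sqrt (R^2) := Real.sqrt_le_sqrt hDR
        _ = R := Real.sqrt_sq hR.le
    have hsτδ : Real.sqrt (T/n) ≤ Real.sqrt δ := Real.sqrt_le_sqrt hτδ
    have hτ2 : (T/n)^2 ≤ Real.sqrt δ := by
      have h1 : (T/n)^2 ≤ δ^2 := by nlinarith
      have h2 : δ^2 ≤ δ := by nlinarith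
      have h3 : δ ≤ Real.sqrt δ := by
        nth_rewrite 1 [show δ = Real.sqrt (δ^2) from (Real.sqrt_sq hδ0.le).symm]
        exact Real.sqrt_le_sqrt h2
      linarith
    have hsδM : Real.sqrt δ ≤ 2*R*ε/M := by
      calc Real.sqrt δ ≤ Real.sqrt ((2*R*ε/M)^2) := Real.sqrt_le_sqrt (min_le_right _ _)
        _ = 2*R*ε/M := Real.sqrt_sq (by positivity)
    have hkey := key T hT n hn1 G gn hI
    rw [← hAdef, ← hDdef] at hkey
    have hmid : Real.sqrt D * Real.sqrt T * Real.sqrt (T/n) * Real.sqrt A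
        ≤ R * Real.sqrt T * Real.sqrt δ * R := by
      have i1 : Real.sqrt D * Real.sqrt T ≤ R * Real.sqrt T :=
        mul_le_mul_of_nonneg_right hsD (Real.sqrt_nonneg T)
      have i2 : Real.sqrt D * Real.sqrt T * Real.sqrt (T/n) ≤ R * Real.sqrt T * Real.sqrt δ :=
        mul_le_mul i1 hsτδ (Real.sqrt_nonneg _) (by positivity)
      exact mul_le_mul i2 hsA (Real.sqrt_nonneg _) (by positivity)
    have hlast : ((T/n)^2/3) * D ≤ Real.sqrt δ * (R^2/3) := by
      calc ((T/n)^2/3) * D ≤ (Real.sqrt δ/3) * D :=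
            mul_le_mul_of_nonneg_right (by linarith) hD0
        _ ≤ (Real.sqrt δ/3) * R^2 := mul_le_mul_of_nonneg_left hDR (by positivity)
        _ = Real.sqrt δ * (R^2/3) := by ring
    have hextra : Real.sqrt D * Real.sqrt T * Real.sqrt (T/n) * Real.sqrt A
        + ((T/n)^2/3) * D ≤ 2*R*ε := by
      have h4 : R * Real.sqrt T * Real.sqrt δ * R + Real.sqrt δ * (R^2/3)
          = Real.sqrt δ * (Real.sqrt T * R^2 + R^2/3) := by ring
      have h5 : Real.sqrt δ * (Real.sqrt T * R^2 + R^2/3) ≤ Real.sqrt δ * M := by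
        refine mul_le_mul_of_nonneg_left ?_ (Real.sqrt_nonneg δ)
        rw [hM]
        linarith
      have h6 : Real.sqrt δ * M ≤ (2*R*ε/M) * M :=
        mul_le_mul_of_nonneg_right hsδM hM0.le
      have h7 : (2*R*ε/M) * M = 2*R*ε := by field_simp
      linarith
    have hW : W12NormSq T gn ≤ (R + ε)^2 := by
      have h8 : W12NormSq T gn ≤ R^2 + 2*R*ε := by linarith
      have h9 : R^2 + 2*R*ε ≤ (R+ε)^2 := by nlinarith [sq_nonneg ε]
      linarith
    calc Real.sqrt (W12NormSq T gn) ≤ Real.sqrt ((R+ε)^2) := Real.sqrt_le_sqrt hW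
      _ = R + ε := Real.sqrt_sq (by positivity)
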